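/- Let E be a finite-dimensional real inner product space and let U : E → ℝ be strictly convex, positive definite, differentiable everywhere, and homogeneous of degree 3/2. Let U* be the convex conjugate of U and let β > 0. Then the function V(x₀, x₁) := U(x₀) + (1+β)U*(x₁) − ⟨x₀, x₁⟩ on E × E is positive definite (V ≥ 0 with V(x₀,x₁) = 0 iff x₀ = 0 and x₁ = 0) and radially unbounded (V(x₀,x₁) → ∞ as ‖(x₀,x₁)‖ → ∞). -/

import Mathlib

open RealInnerProductSpace

/-- The convex (Fenchel) conjugate `U*(y) = sup_x (⟨x,y⟩ - U(x))`. -/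
noncomputable def fenchelConj {E : Type*} [NormedAddCommGroup E] [InnerProductSpace ℝ E]
    (U : E → ℝ) (y : E) : ℝ :=
  ⨆ x : E, (⟪x, y⟫ - U x)

private lemma young_scaled {a b ε : ℝ} (ha : 0 ≤ a) (hb : 0 ≤ b) (hε : 0 < ε) :
    a * b ≤ (2/3) * ε * a ^ ((3:ℝ)/2) + b ^ (3:ℝ) / (3 * ε ^ 2) := by
  have hc : (0:ℝ) < ε ^ ((2:ℝ)/3) := Real.rpow_pos_of_pos hε _
  have hyoung := Real.young_inequality_of_nonneg
    (mul_nonneg hc.le ha) (div_nonneg hb hc.le) (Real.holderConjugate_iff.mpr ⟨by norm_num, by norm_num⟩ : ((3:ℝ)/2).HolderConjugate 3)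
  have e0 : ε ^ ((2:ℝ)/3) * a * (b / ε ^ ((2:ℝ)/3)) = a * b := by
    field_simp
  have e1 : (ε ^ ((2:ℝ)/3) * a) ^ ((3:ℝ)/2) = ε * a ^ ((3:ℝ)/2) := by
    rw [Real.mul_rpow hc.le ha, ← Real.rpow_mul hε.le]
    norm_num
  have e2 : (b / ε ^ ((2:ℝ)/3)) ^ (3:ℝ) = b ^ (3:ℝ) / ε ^ 2 := by
    rw [Real.div_rpow hb hc.le, ← Real.rpow_mul hε.le]
    norm_num
  rw [e0, e1, e2] at hyoung
  calc a * b ≤ ε * a ^ ((3:ℝ)/2) / (3/2) + b ^ (3:ℝ) / ε ^ 2 / 3 := hyoung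
    _ = (2/3) * ε * a ^ ((3:ℝ)/2) + b ^ (3:ℝ) / (3 * ε ^ 2) := by ring

private lemma rpow_three_halves {t : ℝ} (ht : 0 < t) :
    t ^ ((3:ℝ)/2) = t * t ^ ((1:ℝ)/2) := by
  rw [show (3:ℝ)/2 = 1 + 1/2 by norm_num, Real.rpow_add ht, Real.rpow_one]

private lemma aux_main
    {E : Type*} [NormedAddCommGroup E] [InnerProductSpace ℝ E] [FiniteDimensional ℝ E]
    [Nontrivial E]
    (U : E → ℝ)
    (hconv : StrictConvexOn ℝ Set.univ U)
    (hpos : ∀ x : E, 0 ≤ U x) (hdef : ∀ x : E, U x = 0 ↔ x = 0)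
    (hdiff : Differentiable ℝ U)
    (hhom : ∀ lam : ℝ, 0 < lam → ∀ x : E, U (lam • x) = lam ^ ((3:ℝ)/2) * U x)
    (β : ℝ) (hβ : 0 < β) :
    (∀ x₀ x₁ : E, 0 ≤ U x₀ + (1 + β) * fenchelConj U x₁ - ⟪x₀, x₁⟫) ∧
    (∀ x₀ x₁ : E,
      U x₀ + (1 + β) * fenchelConj U x₁ - ⟪x₀, x₁⟫ = 0 ↔ (x₀ = 0 ∧ x₁ = 0)) ∧
    (∀ M : ℝ, ∃ R : ℝ, ∀ x₀ x₁ : E, R ≤ ‖(x₀, x₁)‖ →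
      M ≤ U x₀ + (1 + β) * fenchelConj U x₁ - ⟪x₀, x₁⟫) := by
  have hU0 : U 0 = 0 := (hdef 0).mpr rfl
  -- min and max of U on the unit sphere
  have hcs : IsCompact (Metric.sphere (0:E) 1) := isCompact_sphere 0 1
  have hne : (Metric.sphere (0:E) 1).Nonempty := NormedSpace.sphere_nonempty.mpr zero_le_one
  obtain ⟨a, haS, ham'⟩ := hcs.exists_isMinOn hne hdiff.continuous.continuousOn
  obtain ⟨b, hbS, hbM'⟩ := hcs.exists_isMaxOn hne hdiff.continuous.continuousOn
  have ham : ∀ z ∈ Metric.sphere (0:E) 1, U a ≤ U z := fun z hz => ham' hz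
  have hbM : ∀ z ∈ Metric.sphere (0:E) 1, U z ≤ U b := fun z hz => hbM' hz
  have ha1 : ‖a‖ = 1 := mem_sphere_zero_iff_norm.mp haS
  have hm : 0 < U a := by
    rcases (hpos a).lt_or_eq with h | h
    · exact h
    · exfalso
      have : a = 0 := (hdef a).mp h.symm
      rw [this, norm_zero] at ha1; norm_num at ha1
  have hmM : U a ≤ U b := ham b hbS
  have hM : 0 < U b := lt_of_lt_of_le hm hmM
  -- lower growth bound
  have hlow : ∀ x : E, U a * ‖x‖ ^ ((3:ℝ)/2) ≤ U x := by
    intro x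
    rcases eq_or_ne x 0 with rfl | hx
    · simp [hU0, Real.zero_rpow (by norm_num : (3:ℝ)/2 ≠ 0)]
    · have hn : 0 < ‖x‖ := norm_pos_iff.mpr hx
      have huS : ‖x‖⁻¹ • x ∈ Metric.sphere (0:E) 1 := by
        rw [mem_sphere_zero_iff_norm]
        exact norm_smul_inv_norm hx
      have hhx := hhom ‖x‖ hn (‖x‖⁻¹ • x)
      rw [smul_inv_smul₀ hn.ne'] at hhx
      rw [hhx]
      have := mul_le_mul_of_nonneg_left (ham _ huS) (Real.rpow_nonneg hn.le ((3:ℝ)/2))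
      linarith
  -- upper growth bound
  have hup : ∀ x : E, U x ≤ U b * ‖x‖ ^ ((3:ℝ)/2) := by
    intro x
    rcases eq_or_ne x 0 with rfl | hx
    · simp [hU0, Real.zero_rpow (by norm_num : (3:ℝ)/2 ≠ 0)]
    · have hn : 0 < ‖x‖ := norm_pos_iff.mpr hx
      have huS : ‖x‖⁻¹ • x ∈ Metric.sphere (0:E) 1 := by
        rw [mem_sphere_zero_iff_norm]
        exact norm_smul_inv_norm hx
      have hhx := hhom ‖x‖ hn (‖x‖⁻¹ • x)
      rw [smul_inv_smul₀ hn.ne'] at hhx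
      rw [hhx]
      have := mul_le_mul_of_nonneg_left (hbM _ huS) (Real.rpow_nonneg hn.le ((3:ℝ)/2))
      linarith
  -- uniform upper bound for the conjugand
  have hC : ∀ y x : E, ⟪x, y⟫ - U x ≤ ‖y‖ ^ (3:ℝ) / (3 * (U a) ^ 2) := by
    intro y x
    have h1 : ⟪x, y⟫ ≤ ‖x‖ * ‖y‖ := real_inner_le_norm x y
    have h2 := young_scaled (norm_nonneg x) (norm_nonneg y) hm
    have h3 := hlow x
    have h4 : 0 ≤ U a * ‖x‖ ^ ((3:ℝ)/2) :=
      mul_nonneg hm.le (Real.rpow_nonneg (norm_nonneg x) _)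
    linarith
  have hbdd : ∀ y : E, BddAbove (Set.range fun x : E => ⟪x, y⟫ - U x) := by
    intro y
    exact ⟨‖y‖ ^ (3:ℝ) / (3 * (U a) ^ 2), by rintro _ ⟨x, rfl⟩; exact hC y x⟩
  have hFY : ∀ x y : E, ⟪x, y⟫ - U x ≤ fenchelConj U y := fun x y => le_ciSup (hbdd y) x
  have hcnn : ∀ y : E, 0 ≤ fenchelConj U y := by
    intro y
    have := hFY 0 y
    simpa [hU0] using this
  have hconj0 : fenchelConj U 0 = 0 := by
    refine le_antisymm (ciSup_le fun x => ?_) (hcnn 0)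
    simp [hpos x]
  -- lower growth bound for the conjugate
  have hclow : ∀ y : E, ‖y‖ ^ (3:ℝ) / (8 * (U b) ^ 2) ≤ fenchelConj U y := by
    intro y
    rcases eq_or_ne y 0 with rfl | hy
    · simp [hconj0, Real.zero_rpow (by norm_num : (3:ℝ) ≠ 0)]
    · have hn : 0 < ‖y‖ := norm_pos_iff.mpr hy
      set σ : ℝ := 1 / (2 * U b) with hσdef
      have hσ : 0 < σ := by positivity
      set t : ℝ := σ ^ 2 * ‖y‖ with htdef
      have ht : 0 < t := by positivity
      have h1 := hFY (t • y) y
      rw [real_inner_smul_left, hhom t ht] at h1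
      have hinner : ⟪y, y⟫ = ‖y‖ * ‖y‖ := real_inner_self_eq_norm_mul_norm y
      rw [hinner] at h1
      -- t^(3/2) = σ^3 * ‖y‖^(3/2)
      have e1 : t ^ ((3:ℝ)/2) = σ ^ 3 * ‖y‖ ^ ((3:ℝ)/2) := by
        rw [htdef, Real.mul_rpow (by positivity) hn.le]
        congr 1
        rw [← Real.rpow_natCast σ 2, ← Real.rpow_mul hσ.le, ← Real.rpow_natCast σ 3]
        norm_num
      have e2 : ‖y‖ ^ ((3:ℝ)/2) * ‖y‖ ^ ((3:ℝ)/2) = ‖y‖ ^ (3:ℝ) := by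
        rw [← Real.rpow_add hn]
        norm_num
      have hUy : U y ≤ U b * ‖y‖ ^ ((3:ℝ)/2) := hup y
      have h2 : t ^ ((3:ℝ)/2) * U y ≤ σ ^ 3 * U b * (‖y‖ ^ ((3:ℝ)/2) * ‖y‖ ^ ((3:ℝ)/2)) := by
        rw [e1]
        have := mul_le_mul_of_nonneg_left hUy
          (by positivity : (0:ℝ) ≤ σ ^ 3 * ‖y‖ ^ ((3:ℝ)/2))
        nlinarith [Real.rpow_nonneg hn.le ((3:ℝ)/2)]
      rw [e2] at h2
      -- now: U* y ≥ t * (‖y‖*‖y‖) - t^(3/2) U y ≥ σ²‖y‖³ - σ³ Ub ‖y‖³ = ‖y‖³/(8 Ub²)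
      have e3 : t * (‖y‖ * ‖y‖) = σ ^ 2 * ‖y‖ ^ (3:ℝ) := by
        rw [htdef, show (3:ℝ) = ((3:ℕ):ℝ) by norm_num, Real.rpow_natCast]
        ring
      have e4 : σ ^ 2 * ‖y‖ ^ (3:ℝ) - σ ^ 3 * U b * ‖y‖ ^ (3:ℝ)
          = ‖y‖ ^ (3:ℝ) / (8 * (U b) ^ 2) := by
        rw [hσdef]
        field_simp
        ring
      clear_value σ t
      linarith [h1, h2, e3.symm.le]
  -- scaled Fenchel–Young: key coercivity bound in x₀
  have hB : ∀ x₀ x₁ : E,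
      (1 - ((1+β)⁻¹) ^ ((1:ℝ)/2)) * U x₀
        ≤ U x₀ + (1 + β) * fenchelConj U x₁ - ⟪x₀, x₁⟫ := by
    intro x₀ x₁
    have hb1 : (0:ℝ) < 1 + β := by linarith
    have hlam : (0:ℝ) < (1+β)⁻¹ := by positivity
    have h := hFY ((1+β)⁻¹ • x₀) x₁
    rw [real_inner_smul_left, hhom _ hlam] at h
    rw [rpow_three_halves hlam] at h
    have hmul := mul_le_mul_of_nonneg_left h hb1.le
    have e : (1+β) * ((1+β)⁻¹ * ⟪x₀, x₁⟫ - (1+β)⁻¹ * (1+β)⁻¹ ^ ((1:ℝ)/2) * U x₀)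
        = ⟪x₀, x₁⟫ - (1+β)⁻¹ ^ ((1:ℝ)/2) * U x₀ := by
      field_simp
    rw [e] at hmul
    linarith
  have hκ : 0 < 1 - ((1+β)⁻¹) ^ ((1:ℝ)/2) := by
    have hb1 : (1:ℝ) < 1 + β := by linarith
    have h1 : ((1+β)⁻¹ : ℝ) < 1 := by
      rw [inv_lt_one_iff₀]; right; exact hb1
    have := Real.rpow_lt_one (by positivity) h1 (by norm_num : (0:ℝ) < 1/2)
    linarith
  -- the three conclusions
  have posdef : ∀ x₀ x₁ : E, 0 ≤ U x₀ + (1 + β) * fenchelConj U x₁ - ⟪x₀, x₁⟫ := by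
    intro x₀ x₁
    have h1 := hFY x₀ x₁
    have h2 := hcnn x₁
    nlinarith
  refine ⟨posdef, ?_, ?_⟩
  · intro x₀ x₁
    constructor
    · intro h
      have h1 := hFY x₀ x₁
      have h2 := hcnn x₁
      have h3 : fenchelConj U x₁ = 0 := by nlinarith
      have h4 : x₁ = 0 := by
        by_contra hx1
        have hn : 0 < ‖x₁‖ := norm_pos_iff.mpr hx1
        have := hclow x₁
        rw [h3] at this
        have : (0:ℝ) < ‖x₁‖ ^ (3:ℝ) / (8 * (U b) ^ 2) := by positivity
        linarith [hclow x₁, h3 ▸ (hclow x₁)]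
      subst h4
      rw [hconj0] at h
      simp at h
      refine ⟨(hdef x₀).mp (by linarith), rfl⟩
    · rintro ⟨rfl, rfl⟩
      simp [hU0, hconj0]
  · intro M
    by_cases hM : M ≤ 0
    · exact ⟨0, fun x₀ x₁ _ => le_trans hM (posdef x₀ x₁)⟩
    · push_neg at hM
      set κ : ℝ := 1 - ((1+β)⁻¹) ^ ((1:ℝ)/2) with hκdef
      set c₁ : ℝ := κ * U a with hc₁def
      set c₂ : ℝ := β / (8 * (U b) ^ 2) with hc₂def
      have hc₁ : 0 < c₁ := mul_pos hκ hm
      have hc₂ : 0 < c₂ := by positivity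
      refine ⟨max 1 (max (M / c₁) (M / c₂)), fun x₀ x₁ hR => ?_⟩
      rw [Prod.norm_def] at hR
      have h1le : (1:ℝ) ≤ max ‖x₀‖ ‖x₁‖ := le_trans (le_max_left _ _) hR
      rcases le_max_iff.mp hR with h | h
      · -- ‖x₀‖ is large
        have h1 : (1:ℝ) ≤ ‖x₀‖ := le_trans (le_max_left _ _) h
        have h2 : M / c₁ ≤ ‖x₀‖ := le_trans ((le_max_left _ _).trans (le_max_right _ _)) h
        have h3 : ‖x₀‖ ≤ ‖x₀‖ ^ ((3:ℝ)/2) := by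
          have := Real.rpow_le_rpow_of_exponent_le h1 (by norm_num : (1:ℝ) ≤ 3/2)
          rwa [Real.rpow_one] at this
        have h4 : M ≤ c₁ * ‖x₀‖ := by
          rw [div_le_iff₀ hc₁] at h2
          linarith [h2]
        have h5 : c₁ * ‖x₀‖ ≤ κ * U x₀ := by
          rw [hc₁def]
          have := hlow x₀
          nlinarith [hκ, h3, mul_le_mul_of_nonneg_left h3 hm.le]
        have h6 := hB x₀ x₁
        linarith
      · -- ‖x₁‖ is large
        have h1 : (1:ℝ) ≤ ‖x₁‖ := le_trans (le_max_left _ _) h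
        have h2 : M / c₂ ≤ ‖x₁‖ := le_trans ((le_max_right _ _).trans (le_max_right _ _)) h
        have h3 : ‖x₁‖ ≤ ‖x₁‖ ^ (3:ℝ) := by
          have := Real.rpow_le_rpow_of_exponent_le h1 (by norm_num : (1:ℝ) ≤ 3)
          rwa [Real.rpow_one] at this
        have h4 : M ≤ c₂ * ‖x₁‖ := by
          rw [div_le_iff₀ hc₂] at h2
          linarith [h2]
        have h5 : c₂ * ‖x₁‖ ≤ β * fenchelConj U x₁ := by
          have hcl := hclow x₁
          rw [hc₂def]
          have : β / (8 * (U b)^2) * ‖x₁‖ ≤ β / (8 * (U b)^2) * ‖x₁‖ ^ (3:ℝ) :=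
            mul_le_mul_of_nonneg_left h3 hc₂.le
          calc β / (8 * (U b)^2) * ‖x₁‖ ≤ β / (8 * (U b)^2) * ‖x₁‖ ^ (3:ℝ) := this
            _ = β * (‖x₁‖ ^ (3:ℝ) / (8 * (U b)^2)) := by ring
            _ ≤ β * fenchelConj U x₁ := mul_le_mul_of_nonneg_left hcl hβ.le
        have h6 := hFY x₀ x₁
        linarith

/-- the Lyapunov candidate `V(x₀,x₁) = U(x₀) + (1+β)U*(x₁) - ⟨x₀,x₁⟩`
is positive definite and radially unbounded. -/
theorem lyapunov_candidate_posdef_radially_unbounded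
    {E : Type*} [NormedAddCommGroup E] [InnerProductSpace ℝ E] [FiniteDimensional ℝ E]
    (U : E → ℝ)
    (hconv : StrictConvexOn ℝ Set.univ U)
    (hpos : ∀ x : E, 0 ≤ U x) (hdef : ∀ x : E, U x = 0 ↔ x = 0)
    (hdiff : Differentiable ℝ U)
    (hhom : ∀ lam : ℝ, 0 < lam → ∀ x : E, U (lam • x) = lam ^ ((3:ℝ)/2) * U x)
    (β : ℝ) (hβ : 0 < β) :
    (∀ x₀ x₁ : E, 0 ≤ U x₀ + (1 + β) * fenchelConj U x₁ - ⟪x₀, x₁⟫) ∧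
    (∀ x₀ x₁ : E,
      U x₀ + (1 + β) * fenchelConj U x₁ - ⟪x₀, x₁⟫ = 0 ↔ (x₀ = 0 ∧ x₁ = 0)) ∧
    (∀ M : ℝ, ∃ R : ℝ, ∀ x₀ x₁ : E, R ≤ ‖(x₀, x₁)‖ →
      M ≤ U x₀ + (1 + β) * fenchelConj U x₁ - ⟪x₀, x₁⟫) := by
  rcases subsingleton_or_nontrivial E with hE | hE
  · -- trivial space
    have hU0 : U 0 = 0 := (hdef 0).mpr rfl
    have hx : ∀ x : E, x = 0 := fun x => Subsingleton.elim x 0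
    have hc : ∀ y : E, fenchelConj U y = 0 := by
      intro y
      have he : (fun x : E => ⟪x, y⟫ - U x) = fun _ => (0:ℝ) := by
        funext x
        rw [hx x, hx y]
        simp [hU0]
      rw [fenchelConj, he, ciSup_const]
    have hV : ∀ x₀ x₁ : E, U x₀ + (1 + β) * fenchelConj U x₁ - ⟪x₀, x₁⟫ = 0 := by
      intro x₀ x₁
      rw [hx x₀, hx x₁]
      simp [hU0, hc]
    refine ⟨fun x₀ x₁ => (hV x₀ x₁).ge, fun x₀ x₁ => ?_, fun M => ?_⟩
    · constructor
      · exact fun _ => ⟨hx x₀, hx x₁⟩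
      · exact fun _ => hV x₀ x₁
    · by_cases hM : M ≤ 0
      · exact ⟨0, fun x₀ x₁ _ => by rw [hV x₀ x₁]; exact hM⟩
      · refine ⟨1, fun x₀ x₁ h => absurd h ?_⟩
        rw [hx x₀, hx x₁]
        simp [Prod.norm_def]
  · exact aux_main U hconv hpos hdef hdiff hhom β hβ
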